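/- Let m ≥ 2 and j ≥ 1. Then E_j ≤ λ_1 γ_1² + 4 C_2^{2j} · Σ_{i=2}^m λ_i γ_i². (Key intermediate inequality in the proof of Theorem 1: testing the CG optimality property with the residual polynomial of the CG process whose initial error has no component along the first eigenvector, and using that this polynomial lies in [0, 1] on [0, λ_2].) -/

import Mathlib

set_option maxHeartbeats 1000000

open Polynomial Polynomial.Chebyshev

lemma myT_real_cosh (n : ℤ) (t : ℝ) :
    (T ℝ n).eval (Real.cosh t) = Real.cosh (n * t) := by
  have h := T_complex_cos (t * Complex.I) n
  rw [Complex.cos_mul_I] at h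
  have h2 : (n : ℂ) * (t * Complex.I) = ((n * t : ℝ) : ℂ) * Complex.I := by push_cast; ring
  rw [h2, Complex.cos_mul_I] at h
  apply Complex.ofReal_injective
  rw [Polynomial.Chebyshev.complex_ofReal_eval_T, Complex.ofReal_cosh, Complex.ofReal_cosh, h]

lemma myT_half (n : ℕ) (u : ℝ) (hu : 0 < u) :
    (T ℝ n).eval ((u + u⁻¹) / 2) = (u ^ n + (u ^ n)⁻¹) / 2 := by
  have h1 : (u + u⁻¹) / 2 = Real.cosh (Real.log u) := by
    rw [Real.cosh_eq, Real.exp_log hu, Real.exp_neg, Real.exp_log hu]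
  have h2 : ((n : ℤ) : ℝ) * Real.log u = Real.log (u ^ n) := by
    rw [Real.log_pow]; push_cast; ring
  rw [h1, myT_real_cosh, h2, Real.cosh_eq, Real.exp_log (by positivity), Real.exp_neg,
    Real.exp_log (by positivity)]

lemma myT_natDegree_le (n : ℕ) : (T ℝ (n : ℤ)).natDegree ≤ n := by
  induction n using Nat.strong_induction_on with
  | _ n ih =>
    match n with
    | 0 => simp [Polynomial.Chebyshev.T_zero]
    | 1 => simp [Polynomial.Chebyshev.T_one]
    | (k+2) =>
      have h1 := ih (k+1) (by omega)
      have h2 := ih k (by omega)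
      rw [show ((k+2 : ℕ) : ℤ) = (k : ℤ) + 2 by push_cast; ring, Polynomial.Chebyshev.T_add_two]
      refine le_trans (Polynomial.natDegree_sub_le _ _) ?_
      have h3 : (2 * X * T ℝ ((k:ℤ)+1)).natDegree ≤ k + 2 := by
        refine le_trans (Polynomial.natDegree_mul_le) ?_
        have : (2 * X : ℝ[X]).natDegree ≤ 1 :=
          le_trans Polynomial.natDegree_mul_le (by simp)
        have h4 : (T ℝ ((k:ℤ)+1)).natDegree ≤ k + 1 := by
          rw [show ((k:ℤ)+1) = ((k+1 : ℕ) : ℤ) by push_cast; ring]; exact h1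
        omega
      omega

lemma myT_abs_le (n : ℤ) {x : ℝ} (h1 : -1 ≤ x) (h2 : x ≤ 1) : |(T ℝ n).eval x| ≤ 1 := by
  rw [← Real.cos_arccos h1 h2, Polynomial.Chebyshev.T_real_cos]
  exact Real.abs_cos_le_one _

lemma my_repr {y : ℝ} (hy : 1 ≤ y) :
    1 ≤ y + Real.sqrt (y ^ 2 - 1) ∧
      (y + Real.sqrt (y ^ 2 - 1) + (y + Real.sqrt (y ^ 2 - 1))⁻¹) / 2 = y := by
  have hnn : (0:ℝ) ≤ y ^ 2 - 1 := by nlinarith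
  have hs : Real.sqrt (y ^ 2 - 1) ^ 2 = y ^ 2 - 1 := Real.sq_sqrt hnn
  have hs0 : 0 ≤ Real.sqrt (y ^ 2 - 1) := Real.sqrt_nonneg _
  have hone : 1 ≤ y + Real.sqrt (y ^ 2 - 1) := by linarith
  have hinv : (y + Real.sqrt (y ^ 2 - 1))⁻¹ = y - Real.sqrt (y ^ 2 - 1) := by
    have hmul : (y + Real.sqrt (y ^ 2 - 1)) * (y - Real.sqrt (y ^ 2 - 1)) = 1 := by nlinarith
    field_simp [show y + Real.sqrt (y^2-1) ≠ 0 by linarith]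
    nlinarith
  exact ⟨hone, by rw [hinv]; ring⟩

lemma myT_mono (n : ℕ) {y z : ℝ} (hy : 1 ≤ y) (hyz : y ≤ z) :
    (T ℝ (n : ℤ)).eval y ≤ (T ℝ (n : ℤ)).eval z := by
  obtain ⟨huy, hey⟩ := my_repr hy
  obtain ⟨huz, hez⟩ := my_repr (hy.trans hyz)
  set uy := y + Real.sqrt (y ^ 2 - 1)
  set uz := z + Real.sqrt (z ^ 2 - 1)
  have huyz : uy ≤ uz := by
    have : Real.sqrt (y ^ 2 - 1) ≤ Real.sqrt (z ^ 2 - 1) :=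
      Real.sqrt_le_sqrt (by nlinarith)
    simp only [uy, uz]; linarith
  rw [← hey, ← hez, myT_half n uy (by linarith), myT_half n uz (by linarith)]
  have h1 : (uy ^ n + (uy ^ n)⁻¹) / 2 = Real.cosh (Real.log (uy ^ n)) := by
    rw [Real.cosh_eq, Real.exp_log (by positivity), Real.exp_neg, Real.exp_log (by positivity)]
  have h2 : (uz ^ n + (uz ^ n)⁻¹) / 2 = Real.cosh (Real.log (uz ^ n)) := by
    rw [Real.cosh_eq, Real.exp_log (by positivity), Real.exp_neg, Real.exp_log (by positivity)]
  rw [h1, h2]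
  apply Real.cosh_le_cosh.2
  rw [abs_of_nonneg (Real.log_nonneg (one_le_pow₀ huy)),
    abs_of_nonneg (Real.log_nonneg (one_le_pow₀ huz))]
  exact Real.log_le_log (by positivity) (pow_le_pow_left₀ (by linarith) huyz n)

lemma myT_one_le (n : ℕ) {y : ℝ} (hy : 1 ≤ y) : 1 ≤ (T ℝ (n : ℤ)).eval y := by
  obtain ⟨huy, hey⟩ := my_repr hy
  rw [← hey, myT_half n _ (by linarith)]
  set v := (y + Real.sqrt (y ^ 2 - 1)) ^ n with hv
  have hv1 : 1 ≤ v := one_le_pow₀ huy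
  have hv0 : 0 < v := by linarith
  have hvi : v * v⁻¹ = 1 := mul_inv_cancel₀ (by linarith)
  nlinarith [sq_nonneg (v - 1)]

/-- Key intermediate inequality in the proof of Theorem 1 of the paper:
`E_j ≤ λ₁ γ₁² + 4 C₂^{2j} Σ_{i=2}^m λ_i γ_i²`, where
`E j = sInf { Σ_{i=1}^m λ_i (γ_i q(λ_i))² : q polynomial, deg q ≤ j, q(0) = 1 }` and
`C₂ = (√κ₂ − 1)/(√κ₂ + 1)` with `κ₂ = λ_m / λ₂`. -/
theorem cg_intermediate_bound_first (m : ℕ) (hm : 2 ≤ m) (lam gam : ℕ → ℝ)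
    (hpos : ∀ i, 1 ≤ i → i ≤ m → 0 < lam i)
    (hmono : ∀ i k, 1 ≤ i → i ≤ k → k ≤ m → lam i ≤ lam k)
    (j : ℕ) (hj : 1 ≤ j) :
    sInf {y : ℝ | ∃ q : Polynomial ℝ, q.natDegree ≤ j ∧ q.eval 0 = 1 ∧
        y = ∑ i ∈ Finset.Icc 1 m, lam i * (gam i * q.eval (lam i)) ^ 2} ≤
      lam 1 * gam 1 ^ 2 +
        4 * ((Real.sqrt (lam m / lam 2) - 1) / (Real.sqrt (lam m / lam 2) + 1)) ^ (2 * j) *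
          ∑ i ∈ Finset.Icc 2 m, lam i * gam i ^ 2 := by
  have ha : 0 < lam 2 := hpos 2 (by omega) hm
  have hb : 0 < lam m := hpos m (by omega) le_rfl
  have hab : lam 2 ≤ lam m := hmono 2 m (by omega) hm le_rfl
  have hl1 : 0 < lam 1 := hpos 1 le_rfl (by omega)
  have h1a : lam 1 ≤ lam 2 := hmono 1 2 le_rfl (by omega) hm
  set C : ℝ := (Real.sqrt (lam m / lam 2) - 1) / (Real.sqrt (lam m / lam 2) + 1) with hC
  have hsrt1 : (1:ℝ) ≤ Real.sqrt (lam m / lam 2) := by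
    rw [show (1:ℝ) = Real.sqrt 1 by simp]
    exact Real.sqrt_le_sqrt ((one_le_div ha).2 hab)
  have hCnn : 0 ≤ C := div_nonneg (by linarith) (by linarith)
  obtain ⟨q, hdeg, h0, h1, hi⟩ : ∃ q : Polynomial ℝ, q.natDegree ≤ j ∧ q.eval 0 = 1 ∧
      (q.eval (lam 1)) ^ 2 ≤ 1 ∧
      ∀ i, 2 ≤ i → i ≤ m → (q.eval (lam i)) ^ 2 ≤ 4 * C ^ (2 * j) := by
    rcases eq_or_lt_of_le hab with heq | hlt
    · refine ⟨1 - Polynomial.C (lam 2)⁻¹ * Polynomial.X, ?_, by simp, ?_, ?_⟩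
      · refine le_trans (Polynomial.natDegree_sub_le _ _) ?_
        have h2 : (Polynomial.C (lam 2)⁻¹ * Polynomial.X : Polynomial ℝ).natDegree ≤ 1 :=
          le_trans Polynomial.natDegree_mul_le (by simp)
        simp only [Polynomial.natDegree_one]
        omega
      · have he : (1 - Polynomial.C (lam 2)⁻¹ * Polynomial.X : Polynomial ℝ).eval (lam 1)
            = 1 - (lam 2)⁻¹ * lam 1 := by simp
        rw [he]
        have h2 : (lam 2)⁻¹ * lam 1 ≤ 1 := by
          rw [inv_mul_le_iff₀ ha]; linarith
        have h3 : 0 ≤ (lam 2)⁻¹ * lam 1 := by positivity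
        nlinarith
      · intro i h2i him
        have hei : lam i = lam 2 := le_antisymm (heq ▸ hmono i m (by omega) him le_rfl)
          (hmono 2 i (by omega) h2i him)
        have he : ((1 - Polynomial.C (lam 2)⁻¹ * Polynomial.X : Polynomial ℝ).eval (lam i)) ^ 2
            = 0 := by
          simp [hei, inv_mul_cancel₀ (ne_of_gt ha)]
        rw [he]
        exact mul_nonneg (by norm_num) (pow_nonneg hCnn _)
    · set a := lam 2 with hadef
      set b := lam m with hbdef
      set s := Real.sqrt (b / a) with hs
      have hba1 : 1 < b / a := (one_lt_div ha).2 hlt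
      have hs2 : s ^ 2 = b / a := Real.sq_sqrt (by positivity)
      have hs1 : 1 < s := by nlinarith [Real.sqrt_nonneg (b / a), hs ▸ Real.sqrt_nonneg (b/a)]
      set u : ℝ := (s + 1) / (s - 1) with hu
      have hu1 : 1 < u := (one_lt_div (by linarith)).2 (by linarith)
      have huC : u⁻¹ = C := by rw [hu, inv_div, hC]
      have hba : 0 < b - a := by linarith
      have hsb : b = s ^ 2 * a := by rw [hs2]; field_simp
      have hσ : (u + u⁻¹) / 2 = (b + a) / (b - a) := by
        rw [hu, inv_div, hsb]
        have h1 : s - 1 ≠ 0 := by linarith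
        have h2 : s + 1 ≠ 0 := by linarith
        have h3 : s ^ 2 * a - a ≠ 0 := by nlinarith
        have h4 : s ^ 2 - 1 ≠ 0 := by nlinarith
        field_simp
        ring
      set D : ℝ := (u ^ j + (u ^ j)⁻¹) / 2 with hD
      have hDval : (T ℝ (j:ℤ)).eval ((b + a) / (b - a)) = D := by
        rw [← hσ, myT_half j u (by linarith)]
      have huj : 1 ≤ u ^ j := one_le_pow₀ hu1.le
      have hujinv : u ^ j * (u ^ j)⁻¹ = 1 := mul_inv_cancel₀ (by positivity)
      have hD1 : 1 ≤ D := by rw [hD]; nlinarith [sq_nonneg (u ^ j - 1)]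
      have hD0 : 0 < D := by linarith
      have hDinv : D⁻¹ ≤ 2 * C ^ j := by
        have hCj : C ^ j = (u ^ j)⁻¹ := by rw [← huC, inv_pow]
        have h1 : u ^ j / 2 ≤ D := by
          rw [hD]
          have : 0 ≤ (u ^ j)⁻¹ := by positivity
          linarith
        have h2 : D⁻¹ ≤ (u ^ j / 2)⁻¹ := inv_anti₀ (by positivity) h1
        rw [hCj]
        calc D⁻¹ ≤ (u ^ j / 2)⁻¹ := h2
          _ = 2 * (u ^ j)⁻¹ := by rw [inv_div]; ring
      refine ⟨Polynomial.C D⁻¹ * ((T ℝ (j:ℤ)).comp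
        (Polynomial.C ((b + a) / (b - a)) - Polynomial.C (2 / (b - a)) * Polynomial.X)),
        ?_, ?_, ?_, ?_⟩
      · have h1 : (Polynomial.C ((b + a) / (b - a)) - Polynomial.C (2 / (b - a)) * Polynomial.X
            : Polynomial ℝ).natDegree ≤ 1 := by
          refine le_trans (Polynomial.natDegree_sub_le _ _) ?_
          have h2 : (Polynomial.C (2 / (b - a)) * Polynomial.X : Polynomial ℝ).natDegree ≤ 1 := by
            refine le_trans Polynomial.natDegree_mul_le ?_
            simp
          simp only [Polynomial.natDegree_C]
          omega
        refine le_trans (Polynomial.natDegree_C_mul_le _ _) ?_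
        refine le_trans (Polynomial.natDegree_comp_le) ?_
        have h3 := Nat.mul_le_mul (myT_natDegree_le j) h1
        omega
      · simp only [Polynomial.eval_mul, Polynomial.eval_C, Polynomial.eval_comp,
          Polynomial.eval_sub, Polynomial.eval_X, mul_zero, sub_zero]
        rw [hDval]
        exact inv_mul_cancel₀ (ne_of_gt hD0)
      · have heval : (Polynomial.C D⁻¹ * ((T ℝ (j:ℤ)).comp
            (Polynomial.C ((b + a) / (b - a)) - Polynomial.C (2 / (b - a)) * Polynomial.X))).eval
              (lam 1)
            = D⁻¹ * (T ℝ (j:ℤ)).eval ((b + a) / (b - a) - 2 / (b - a) * lam 1) := by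
          simp [Polynomial.eval_comp]
        rw [heval]
        set t1 : ℝ := (b + a) / (b - a) - 2 / (b - a) * lam 1 with ht1
        have ht1e : t1 = (b + a - 2 * lam 1) / (b - a) := by rw [ht1]; field_simp
        have ht1ge : 1 ≤ t1 := by
          rw [ht1e, le_div_iff₀ hba]; linarith
        have ht1le : t1 ≤ (b + a) / (b - a) := by
          rw [ht1e, div_le_div_iff₀ hba hba]; nlinarith
        have hT1 : 1 ≤ (T ℝ (j:ℤ)).eval t1 := myT_one_le j ht1ge
        have hT2 : (T ℝ (j:ℤ)).eval t1 ≤ D := hDval ▸ myT_mono j ht1ge ht1le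
        have hle : D⁻¹ * (T ℝ (j:ℤ)).eval t1 ≤ 1 := by
          rw [inv_mul_le_iff₀ hD0]; linarith
        have hge : 0 ≤ D⁻¹ * (T ℝ (j:ℤ)).eval t1 := by positivity
        nlinarith
      · intro i h2i him
        have hai : a ≤ lam i := hmono 2 i (by omega) h2i him
        have hbi : lam i ≤ b := hmono i m (by omega) him le_rfl
        have heval : (Polynomial.C D⁻¹ * ((T ℝ (j:ℤ)).comp
            (Polynomial.C ((b + a) / (b - a)) - Polynomial.C (2 / (b - a)) * Polynomial.X))).eval
              (lam i)
            = D⁻¹ * (T ℝ (j:ℤ)).eval ((b + a) / (b - a) - 2 / (b - a) * lam i) := by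
          simp [Polynomial.eval_comp]
        rw [heval]
        set ti : ℝ := (b + a) / (b - a) - 2 / (b - a) * lam i with hti
        have htie : ti = (b + a - 2 * lam i) / (b - a) := by rw [hti]; field_simp
        have htige : -1 ≤ ti := by
          rw [htie, le_div_iff₀ hba]; linarith
        have htile : ti ≤ 1 := by
          rw [htie, div_le_one hba]; linarith
        have habs := abs_le.1 (myT_abs_le (j:ℤ) htige htile)
        have hT2 : ((T ℝ (j:ℤ)).eval ti) ^ 2 ≤ 1 := by nlinarith [habs.1, habs.2]
        have hDi : 0 ≤ D⁻¹ := by positivity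
        have hDi2 : (D⁻¹) ^ 2 ≤ 4 * C ^ (2 * j) := by
          rw [show 2 * j = j * 2 by ring, pow_mul]
          nlinarith [hDinv, pow_nonneg hCnn j]
        calc (D⁻¹ * (T ℝ (j:ℤ)).eval ti) ^ 2 = (D⁻¹) ^ 2 * ((T ℝ (j:ℤ)).eval ti) ^ 2 := by ring
          _ ≤ 4 * C ^ (2 * j) := by nlinarith [sq_nonneg D⁻¹, sq_nonneg ((T ℝ (j:ℤ)).eval ti)]
  · have hbdd : BddBelow {y : ℝ | ∃ q : Polynomial ℝ, q.natDegree ≤ j ∧ q.eval 0 = 1 ∧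
        y = ∑ i ∈ Finset.Icc 1 m, lam i * (gam i * q.eval (lam i)) ^ 2} := by
      refine ⟨0, fun y hy => ?_⟩
      obtain ⟨p, _, _, rfl⟩ := hy
      apply Finset.sum_nonneg
      intro i hi
      rw [Finset.mem_Icc] at hi
      have := hpos i hi.1 hi.2
      positivity
    have hmem : (∑ i ∈ Finset.Icc 1 m, lam i * (gam i * q.eval (lam i)) ^ 2) ∈
        {y : ℝ | ∃ q : Polynomial ℝ, q.natDegree ≤ j ∧ q.eval 0 = 1 ∧
          y = ∑ i ∈ Finset.Icc 1 m, lam i * (gam i * q.eval (lam i)) ^ 2} := ⟨q, hdeg, h0, rfl⟩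
    refine le_trans (csInf_le hbdd hmem) ?_
    have hsplit : Finset.Icc 1 m = insert 1 (Finset.Icc 2 m) := by
      ext x; simp only [Finset.mem_Icc, Finset.mem_insert]; omega
    rw [hsplit, Finset.sum_insert (by simp)]
    have hterm1 : lam 1 * (gam 1 * q.eval (lam 1)) ^ 2 ≤ lam 1 * gam 1 ^ 2 := by
      rw [mul_pow]
      nlinarith [mul_nonneg (mul_nonneg hl1.le (sq_nonneg (gam 1))) (sub_nonneg.2 h1)]
    have hterm2 : ∑ i ∈ Finset.Icc 2 m, lam i * (gam i * q.eval (lam i)) ^ 2 ≤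
        4 * C ^ (2 * j) * ∑ i ∈ Finset.Icc 2 m, lam i * gam i ^ 2 := by
      rw [Finset.mul_sum]
      apply Finset.sum_le_sum
      intro i hmemi
      rw [Finset.mem_Icc] at hmemi
      have hqi := hi i hmemi.1 hmemi.2
      have hli := (hpos i (by omega) hmemi.2).le
      rw [mul_pow]
      nlinarith [mul_nonneg (mul_nonneg hli (sq_nonneg (gam i))) (sub_nonneg.2 hqi)]
    linarith
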